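/- Let F be in the class ℬ with Taylor expansion F(z) = ∑_{k=0}^∞ b_k z^k. Then for every r ∈ (0,1), one has ∑_{k=1}^∞ k |b_k|² r^{2k} ≤ r²/(1−r²). -/

import Mathlib

open Complex intervalIntegral Metric Nat Finset MeasureTheory

lemma exp_int_orth (m : ℤ) :
    ∫ θ in (0:ℝ)..(2*Real.pi), Complex.exp (m * θ * I)
      = if m = 0 then (2*Real.pi : ℂ) else 0 := by
  rcases eq_or_ne m 0 with rfl | hm
  · simp
  · have h0 : ∀ θ:ℝ, Complex.exp (m * θ * I) = Complex.exp ((m*I) * θ) := by intro θ; ring_nf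
    simp_rw [h0]
    rw [integral_exp_mul_complex (by simp [hm, I_ne_zero])]
    have h1 : (m:ℂ) * I * ((2:ℝ) * Real.pi : ℝ) = m * (2 * Real.pi * I) := by push_cast; ring
    rw [h1, Complex.exp_int_mul_two_pi_mul_I]
    simp [hm]

lemma exp_orth (j k : ℕ) :
    ∫ θ in (0:ℝ)..(2*Real.pi),
        Complex.exp (j * θ * I) * (starRingEnd ℂ) (Complex.exp (k * θ * I))
      = if j = k then (2*Real.pi : ℂ) else 0 := by
  set m : ℤ := (j : ℤ) - (k : ℤ) with hm
  have h0 : ∀ θ:ℝ, Complex.exp (j * θ * I) * (starRingEnd ℂ) (Complex.exp (k * θ * I))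
      = Complex.exp ((m : ℂ) * θ * I) := by
    intro θ
    rw [← Complex.exp_conj, ← Complex.exp_add]
    congr 1
    simp [Complex.conj_I, hm]
    ring
  simp_rw [h0]
  rw [exp_int_orth]
  have : m = 0 ↔ j = k := by omega
  simp [this]

lemma interval_integral_re {f : ℝ → ℂ} {a b : ℝ} (hab : a ≤ b)
    (hf : IntervalIntegrable f MeasureTheory.volume a b) :
    (∫ θ in a..b, f θ).re = ∫ θ in a..b, (f θ).re := by
  rw [intervalIntegral.integral_of_le hab, intervalIntegral.integral_of_le hab]
  rw [show (∫ x in Set.Ioc a b, f x).re = RCLike.re (∫ x in Set.Ioc a b, f x) from rfl,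
    ← integral_re hf.1]
  rfl

lemma norm_sq_eq_mul_conj_re (x : ℂ) : (‖x‖:ℝ)^2 = (x * (starRingEnd ℂ) x).re := by
  rw [Complex.mul_conj, Complex.normSq_eq_norm_sq]
  exact (Complex.ofReal_re _).symm

lemma conj_mul_self (z : ℂ) : (starRingEnd ℂ) z * z = ((‖z‖^2 : ℝ) : ℂ) := by
  rw [mul_comm, Complex.mul_conj, Complex.normSq_eq_norm_sq]

lemma bessel {g : ℝ → ℂ} (hg : Continuous g) {γ : ℕ → ℂ} {N : ℕ} {M : ℝ}
    (hA : ∀ m, m < N →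
      ∫ θ in (0:ℝ)..(2*Real.pi), g θ * (starRingEnd ℂ) (Complex.exp (m * θ * I))
        = (2*Real.pi : ℂ) * γ m)
    (hM : ∀ θ : ℝ, ‖g θ‖ ≤ M) :
    ∑ m ∈ Finset.range N, ‖γ m‖^2 ≤ M^2 := by
  have hπ : (0:ℝ) < 2*Real.pi := Real.two_pi_pos
  set e : ℕ → ℝ → ℂ := fun m θ => Complex.exp (m * θ * I) with he
  have hec : ∀ m, Continuous (e m) := by
    intro m
    apply Complex.continuous_exp.comp
    fun_prop
  set P : ℝ → ℂ := fun θ => ∑ m ∈ Finset.range N, γ m * e m θ with hP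
  have hPc : Continuous P := by
    apply continuous_finset_sum
    exact fun m _ => continuous_const.mul (hec m)
  set S : ℝ := ∑ m ∈ Finset.range N, ‖γ m‖^2 with hS
  have hconjP : Continuous fun θ => (starRingEnd ℂ) (P θ) := continuous_star.comp hPc
  have hint1 : IntervalIntegrable (fun θ => g θ * (starRingEnd ℂ) (P θ))
      MeasureTheory.volume 0 (2*Real.pi) := (hg.mul hconjP).intervalIntegrable _ _
  have hint2 : IntervalIntegrable (fun θ => P θ * (starRingEnd ℂ) (P θ))
      MeasureTheory.volume 0 (2*Real.pi) := (hPc.mul hconjP).intervalIntegrable _ _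
  -- first moment computation
  have h1 : ∫ θ in (0:ℝ)..(2*Real.pi), g θ * (starRingEnd ℂ) (P θ)
      = (2*Real.pi : ℂ) * (S : ℂ) := by
    have e1 : ∀ θ:ℝ, g θ * (starRingEnd ℂ) (P θ)
        = ∑ m ∈ Finset.range N, (starRingEnd ℂ) (γ m) * (g θ * (starRingEnd ℂ) (e m θ)) := by
      intro θ
      rw [hP]
      simp only [map_sum, map_mul, Finset.mul_sum]
      exact Finset.sum_congr rfl (by intros; ring)
    simp_rw [e1]
    rw [intervalIntegral.integral_finset_sum]
    · have : ∀ m ∈ Finset.range N,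
          (∫ θ in (0:ℝ)..(2*Real.pi), (starRingEnd ℂ) (γ m) * (g θ * (starRingEnd ℂ) (e m θ)))
          = (2*Real.pi : ℂ) * ((‖γ m‖^2 : ℝ) : ℂ) := by
        intro m hm
        rw [intervalIntegral.integral_const_mul, hA m (Finset.mem_range.1 hm)]
        rw [← mul_assoc, mul_comm ((starRingEnd ℂ) (γ m)) ((2*Real.pi : ℂ)), mul_assoc,
          conj_mul_self]
      rw [Finset.sum_congr rfl this, ← Finset.mul_sum]
      congr 1
      rw [hS]
      push_cast
      rfl
    · intro m _
      exact (continuous_const.mul (hg.mul (continuous_star.comp (hec m)))).intervalIntegrable _ _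
  -- second moment
  have h2 : ∫ θ in (0:ℝ)..(2*Real.pi), P θ * (starRingEnd ℂ) (P θ)
      = (2*Real.pi : ℂ) * (S : ℂ) := by
    have e2 : ∀ θ:ℝ, P θ * (starRingEnd ℂ) (P θ)
        = ∑ j ∈ Finset.range N, ∑ k ∈ Finset.range N,
            (γ j * (starRingEnd ℂ) (γ k)) * (e j θ * (starRingEnd ℂ) (e k θ)) := by
      intro θ
      rw [hP]
      rw [map_sum, Finset.sum_mul_sum]
      apply Finset.sum_congr rfl
      intro j _
      apply Finset.sum_congr rfl
      intro k _
      rw [map_mul]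
      ring
    simp_rw [e2]
    rw [intervalIntegral.integral_finset_sum]
    · have inner : ∀ j ∈ Finset.range N,
          (∫ θ in (0:ℝ)..(2*Real.pi), ∑ k ∈ Finset.range N,
            (γ j * (starRingEnd ℂ) (γ k)) * (e j θ * (starRingEnd ℂ) (e k θ)))
          = (2*Real.pi : ℂ) * ((‖γ j‖^2 : ℝ) : ℂ) := by
        intro j hj
        rw [intervalIntegral.integral_finset_sum]
        · have : ∀ k ∈ Finset.range N,
              (∫ θ in (0:ℝ)..(2*Real.pi),
                (γ j * (starRingEnd ℂ) (γ k)) * (e j θ * (starRingEnd ℂ) (e k θ)))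
              = if j = k then (γ j * (starRingEnd ℂ) (γ k)) * (2*Real.pi : ℂ) else 0 := by
            intro k _
            rw [intervalIntegral.integral_const_mul, exp_orth]
            split <;> simp
          rw [Finset.sum_congr rfl this, Finset.sum_ite_eq, if_pos hj]
          rw [mul_comm _ (2*Real.pi : ℂ), mul_comm (γ j) _, conj_mul_self]
        · intro k _
          exact (continuous_const.mul
            ((hec j).mul (continuous_star.comp (hec k)))).intervalIntegrable _ _
      rw [Finset.sum_congr rfl inner, ← Finset.mul_sum]
      congr 1
      rw [hS]
      push_cast
      rfl
    · intro j _
      apply Continuous.intervalIntegrable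
      apply continuous_finset_sum
      exact fun k _ => continuous_const.mul ((hec j).mul (continuous_star.comp (hec k)))
  -- expansion of the square
  have hgP : ∀ θ:ℝ, ‖g θ - P θ‖^2
      = ‖g θ‖^2 - 2*(g θ * (starRingEnd ℂ) (P θ)).re + (P θ * (starRingEnd ℂ) (P θ)).re := by
    intro θ
    rw [norm_sq_eq_mul_conj_re, norm_sq_eq_mul_conj_re]
    have expand : (g θ - P θ) * (starRingEnd ℂ) (g θ - P θ)
        = g θ * (starRingEnd ℂ) (g θ) - (g θ * (starRingEnd ℂ) (P θ)
            + (starRingEnd ℂ) (g θ * (starRingEnd ℂ) (P θ)))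
          + P θ * (starRingEnd ℂ) (P θ) := by
      simp only [map_sub, map_mul, Complex.conj_conj]
      ring
    rw [expand]
    simp only [Complex.sub_re, Complex.add_re, Complex.conj_re]
    ring
  have hM0 : 0 ≤ M := (norm_nonneg (g 0)).trans (hM 0)
  have hgnint : IntervalIntegrable (fun θ => ‖g θ‖^2) MeasureTheory.volume 0 (2*Real.pi) :=
    ((hg.norm.pow 2)).intervalIntegrable _ _
  have hreint1 : IntervalIntegrable (fun θ => (g θ * (starRingEnd ℂ) (P θ)).re)
      MeasureTheory.volume 0 (2*Real.pi) :=
    (Complex.continuous_re.comp (hg.mul hconjP)).intervalIntegrable _ _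
  have hreint2 : IntervalIntegrable (fun θ => (P θ * (starRingEnd ℂ) (P θ)).re)
      MeasureTheory.volume 0 (2*Real.pi) :=
    (Complex.continuous_re.comp (hPc.mul hconjP)).intervalIntegrable _ _
  have hnonneg : (0:ℝ) ≤ ∫ θ in (0:ℝ)..(2*Real.pi), ‖g θ - P θ‖^2 :=
    intervalIntegral.integral_nonneg hπ.le (fun θ _ => sq_nonneg _)
  have hsplit : (∫ θ in (0:ℝ)..(2*Real.pi), ‖g θ - P θ‖^2)
      = (∫ θ in (0:ℝ)..(2*Real.pi), ‖g θ‖^2) - 2*Real.pi*S := by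
    simp_rw [hgP]
    rw [intervalIntegral.integral_add (hgnint.sub (hreint1.const_mul 2)) hreint2,
      intervalIntegral.integral_sub hgnint (hreint1.const_mul 2),
      intervalIntegral.integral_const_mul]
    rw [← interval_integral_re hπ.le hint1, ← interval_integral_re hπ.le hint2, h1, h2]
    have : ((2*Real.pi : ℂ) * (S:ℂ)).re = 2*Real.pi*S := by
      have : (2*Real.pi : ℂ) * (S:ℂ) = ((2*Real.pi*S : ℝ) : ℂ) := by push_cast; ring
      rw [this, Complex.ofReal_re]
    rw [this]
    ring
  have hup : (∫ θ in (0:ℝ)..(2*Real.pi), ‖g θ‖^2) ≤ 2*Real.pi*M^2 := by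
    have : (∫ θ in (0:ℝ)..(2*Real.pi), (M^2 : ℝ)) = 2*Real.pi*M^2 := by
      rw [intervalIntegral.integral_const, smul_eq_mul]
      ring
    rw [← this]
    apply intervalIntegral.integral_mono_on hπ.le hgnint (intervalIntegrable_const)
    intro θ _
    have := hM θ
    nlinarith [norm_nonneg (g θ)]
  have : 2*Real.pi*S ≤ 2*Real.pi*M^2 := by linarith [hsplit ▸ hnonneg, hup]
  exact le_of_mul_le_mul_left this hπ

lemma conj_exp_nat (n : ℕ) (θ : ℝ) :
    (starRingEnd ℂ) (Complex.exp (n * θ * I)) = (Complex.exp (θ * I))⁻¹ ^ n := by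
  rw [← Complex.exp_conj, map_mul, map_mul, Complex.conj_I, map_natCast, Complex.conj_ofReal]
  have : (n:ℂ) * θ * -I = n * (-(θ*I)) := by ring
  rw [this, Complex.exp_nat_mul, Complex.exp_neg]

lemma cauchy_coeff {f : ℂ → ℂ} {ρ : NNReal} (hρ : 0 < ρ)
    (hf : DifferentiableOn ℂ f (closedBall 0 ρ)) (n : ℕ) :
    ∫ θ in (0:ℝ)..(2*Real.pi), f (circleMap 0 ρ θ) * (starRingEnd ℂ) (Complex.exp (n * θ * I))
      = (2*Real.pi : ℂ) * ((n ! : ℂ)⁻¹ * iteratedDeriv n f 0) * (ρ:ℝ)^n := by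
  have hρR : (0:ℝ) < ρ := hρ
  have h := hf.hasFPowerSeriesOnBall hρ
  have hfac := h.factorial_smul (1:ℂ) n
  rw [← iteratedDeriv_eq_iteratedFDeriv] at hfac
  have happ := cauchyPowerSeries_apply f 0 (ρ:ℝ) n 1
  rw [circleIntegral] at happ
  have key : ∀ θ:ℝ, deriv (circleMap 0 (ρ:ℝ)) θ •
      ((1/(circleMap 0 (ρ:ℝ) θ - 0))^n • (circleMap 0 (ρ:ℝ) θ - 0)⁻¹ • f (circleMap 0 (ρ:ℝ) θ))
      = (I * ((ρ:ℂ)⁻¹)^n) * (f (circleMap 0 (ρ:ℝ) θ) * (starRingEnd ℂ) (Complex.exp (n * θ * I))) := by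
    intro θ
    have hne : Complex.exp (θ * I) ≠ 0 := Complex.exp_ne_zero _
    have hρne : (ρ:ℂ) ≠ 0 := by exact_mod_cast hρR.ne'
    rw [deriv_circleMap, circleMap_zero, conj_exp_nat]
    simp only [smul_eq_mul, sub_zero]
    field_simp
    ring
  simp_rw [key] at happ
  rw [intervalIntegral.integral_const_mul] at happ
  -- happ : coeff = (2πI)⁻¹ • (I * ρ⁻ⁿ * ∫ ...)
  have hπ : (2*Real.pi : ℂ) ≠ 0 := by
    simp [Real.pi_ne_zero]
  have hρne : (ρ:ℂ) ≠ 0 := by exact_mod_cast hρR.ne'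
  have hIn : ((cauchyPowerSeries f 0 (ρ:ℝ) n) fun _ => 1) = (n ! : ℂ)⁻¹ * iteratedDeriv n f 0 := by
    rw [← hfac]
    simp [smul_eq_mul]
    rw [← mul_assoc, inv_mul_cancel₀ (by exact_mod_cast Nat.factorial_ne_zero n), one_mul]
  rw [hIn] at happ
  rw [happ]
  have hcast : ((ρ:ℝ) : ℂ) = (ρ:ℂ) := rfl
  set J := ∫ θ in (0:ℝ)..(2*Real.pi), f (circleMap 0 ρ θ) * (starRingEnd ℂ) (Complex.exp (n * θ * I)) with hJ
  rw [smul_eq_mul]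
  field_simp
  rw [one_div_pow, mul_assoc, one_div_mul_cancel (pow_ne_zero n hρne), mul_one]

lemma taylor_coeff {F : ℂ → ℂ} {b : ℕ → ℂ}
    (hb : ∀ z ∈ ball (0:ℂ) 1, HasSum (fun k : ℕ => b k * z ^ k) (F z)) (n : ℕ) :
    iteratedDeriv n F 0 = (n ! : ℂ) * b n := by
  have hcoeff : ∀ m, (FormalMultilinearSeries.ofScalars ℂ b).coeff m = b m := by
    intro m
    have h1 : (1 : Fin m → ℂ) = fun _ => (1:ℂ) := rfl
    rw [FormalMultilinearSeries.coeff, h1, FormalMultilinearSeries.ofScalars_apply_eq]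
    simp
  have hP : HasFPowerSeriesAt F (FormalMultilinearSeries.ofScalars ℂ b) 0 := by
    rw [hasFPowerSeriesAt_iff]
    filter_upwards [Metric.ball_mem_nhds (0:ℂ) one_pos] with z hz
    have hz' := hb z hz
    rw [zero_add]
    convert hz' using 2 with k
    · rfl
    rw [hcoeff, smul_eq_mul, mul_comm]
  obtain ⟨R, hR⟩ := hP
  have h := hR.factorial_smul (1:ℂ) n
  rw [← iteratedDeriv_eq_iteratedFDeriv] at h
  rw [← h]
  have : (FormalMultilinearSeries.ofScalars ℂ b n) (fun _ => (1:ℂ)) = b n := by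
    rw [FormalMultilinearSeries.ofScalars_apply_eq]
    simp
  rw [this]
  simp [smul_eq_mul]

lemma bessel_deriv {F : ℂ → ℂ} {b : ℕ → ℂ}
    (hF : DifferentiableOn ℂ F (ball (0:ℂ) 1))
    (hderiv : ∀ z ∈ ball (0:ℂ) 1, ‖deriv F z‖ ≤ 1 / (1 - ‖z‖ ^ 2))
    (hb : ∀ z ∈ ball (0:ℂ) 1, HasSum (fun k : ℕ => b k * z ^ k) (F z))
    {ρ : ℝ} (hρ0 : 0 < ρ) (hρ1 : ρ < 1) (N : ℕ) :
    ∑ m ∈ Finset.range N, ((m+1:ℝ) * ‖b (m+1)‖ * ρ^m)^2 ≤ (1/(1-ρ^2))^2 := by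
  have hFan := hF.analyticOnNhd isOpen_ball
  have hF' : DifferentiableOn ℂ (deriv F) (ball (0:ℂ) 1) := hFan.deriv.differentiableOn
  set ρ' : NNReal := ⟨ρ, hρ0.le⟩ with hρ'
  have hsub : closedBall (0:ℂ) ρ ⊆ ball (0:ℂ) 1 := closedBall_subset_ball hρ1
  have hfd : DifferentiableOn ℂ (deriv F) (closedBall (0:ℂ) ρ') := hF'.mono hsub
  have hmem : ∀ θ:ℝ, circleMap 0 ρ θ ∈ ball (0:ℂ) 1 := by
    intro θ
    simp only [mem_ball_zero_iff, norm_circleMap_zero, abs_of_pos hρ0]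
    exact hρ1
  have hgc : Continuous (fun θ => deriv F (circleMap 0 ρ θ)) :=
    hF'.continuousOn.comp_continuous (continuous_circleMap 0 ρ) hmem
  have key := bessel hgc (γ := fun m => ((m:ℂ)+1) * b (m+1) * (ρ:ℂ)^m) (N := N) (M := 1/(1-ρ^2))
    (fun m _ => by
      have hc := cauchy_coeff (f := deriv F) (ρ := ρ') (by exact_mod_cast hρ0) hfd m
      have hρcoe : ((ρ':ℝ)) = ρ := rfl
      rw [hρcoe] at hc
      rw [hc]
      have hiter : iteratedDeriv m (deriv F) 0 = iteratedDeriv (m+1) F 0 :=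
        (congrFun (iteratedDeriv_succ' (n := m) (f := F)) 0).symm
      rw [hiter, taylor_coeff hb (m+1)]
      have hfacne : (m ! : ℂ) ≠ 0 := by exact_mod_cast (Nat.factorial_ne_zero m)
      rw [Nat.factorial_succ]
      push_cast
      field_simp)
    (fun θ => by
      have h := hderiv _ (hmem θ)
      have : ‖circleMap 0 ρ θ‖ = ρ := by
        simp [norm_circleMap_zero, abs_of_pos hρ0]
      rw [this] at h
      exact h)
  refine le_trans (le_of_eq ?_) key
  apply Finset.sum_congr rfl
  intro m _
  have : ‖((m:ℂ)+1) * b (m+1) * (ρ:ℂ)^m‖ = (m+1:ℝ) * ‖b (m+1)‖ * ρ^m := by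
    rw [norm_mul, norm_mul, norm_pow]
    have h1 : ‖((m:ℂ)+1)‖ = (m+1:ℝ) := by
      rw [show ((m:ℂ)+1) = ((m+1:ℕ):ℂ) by push_cast; ring, Complex.norm_natCast]
      push_cast
      ring
    have h2 : ‖(ρ:ℂ)‖ = ρ := by
      simp [Complex.norm_real, abs_of_pos hρ0]
    rw [h1, h2]
  rw [this]

theorem bloch_area_simple_bound
    (F : ℂ → ℂ) (b : ℕ → ℂ)
    (hF : DifferentiableOn ℂ F (ball (0:ℂ) 1))
    (hderiv : ∀ z ∈ ball (0:ℂ) 1, ‖deriv F z‖ ≤ 1 / (1 - ‖z‖ ^ 2))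
    (hb : ∀ z ∈ ball (0:ℂ) 1, HasSum (fun k : ℕ => b k * z ^ k) (F z))
    (r : ℝ) (hr0 : 0 < r) (hr1 : r < 1) :
    ∑' k : ℕ, (k : ℝ) * ‖b k‖ ^ 2 * r ^ (2 * k) ≤ r ^ 2 / (1 - r ^ 2) := by
  have h1r : (0:ℝ) < 1 - r^2 := by nlinarith
  apply Real.tsum_le_of_sum_range_le
  · intro k
    positivity
  · intro n
    have mono : ∑ i ∈ Finset.range n, (i:ℝ)*‖b i‖^2*r^(2*i)
        ≤ ∑ i ∈ Finset.range (n+1), (i:ℝ)*‖b i‖^2*r^(2*i) := by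
      rw [Finset.sum_range_succ]
      have : (0:ℝ) ≤ (n:ℝ)*‖b n‖^2*r^(2*n) := by positivity
      linarith
    refine le_trans mono ?_
    rw [Finset.sum_range_succ']
    simp only [Nat.cast_zero, zero_mul, add_zero]
    set Phi : ℝ → ℝ := fun rho => ∑ m ∈ Finset.range n, ((m:ℝ)+1) * ‖b (m+1)‖^2 * rho^(2*m+2) with hPhi
    set phi : ℝ → ℝ := fun rho => ∑ m ∈ Finset.range n,
      (2*((m:ℝ)+1)^2 * ‖b (m+1)‖^2) * rho^(2*m+1) with hphi
    have hPhid : ∀ rho:ℝ, HasDerivAt Phi (phi rho) rho := by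
      intro rho
      apply HasDerivAt.fun_sum
      intro m _
      have h := (hasDerivAt_pow (2*m+2) rho).const_mul (((m:ℝ)+1) * ‖b (m+1)‖^2)
      refine h.congr_deriv ?_
      have h2 : 2*m+2-1 = 2*m+1 := by omega
      rw [h2]
      push_cast
      ring
    have hphic : Continuous phi := by
      apply continuous_finset_sum
      exact fun m _ => continuous_const.mul (continuous_pow _)
    have hint : ∫ rho in (0:ℝ)..r, phi rho = Phi r - Phi 0 :=
      intervalIntegral.integral_eq_sub_of_hasDerivAt (fun t _ => hPhid t)
        (hphic.intervalIntegrable _ _)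
    have hPhi0 : Phi 0 = 0 := by
      rw [hPhi]
      apply Finset.sum_eq_zero
      intro m _
      rw [zero_pow (by omega)]
      ring
    have hψcont : ContinuousOn (fun rho:ℝ => 2*rho/(1-rho^2)^2) (Set.uIcc 0 r) := by
      apply ContinuousOn.div
      · fun_prop
      · fun_prop
      · intro t ht
        rw [Set.uIcc_of_le hr0.le] at ht
        have h1 : (0:ℝ) < 1 - t^2 := by nlinarith [ht.1, ht.2]
        positivity
    have hψint : IntervalIntegrable (fun rho:ℝ => 2*rho/(1-rho^2)^2) MeasureTheory.volume 0 r :=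
      hψcont.intervalIntegrable
    have hcomp : ∫ rho in (0:ℝ)..r, phi rho ≤ ∫ rho in (0:ℝ)..r, 2*rho/(1-rho^2)^2 := by
      apply intervalIntegral.integral_mono_on hr0.le (hphic.intervalIntegrable _ _) hψint
      intro rho hrho
      rcases eq_or_lt_of_le hrho.1 with heq | hpos
      · rw [hphi, ← heq]
        simp only
        rw [Finset.sum_eq_zero (fun m _ => by rw [zero_pow (by omega)]; ring)]
        norm_num
      · have hrho1 : rho < 1 := lt_of_le_of_lt hrho.2 hr1
        have h1rho : (0:ℝ) < 1 - rho^2 := by nlinarith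
        have hsum := bessel_deriv hF hderiv hb hpos hrho1 n
        have hfactor : phi rho = 2*rho * ∑ m ∈ Finset.range n, ((m+1:ℝ)*‖b (m+1)‖*rho^m)^2 := by
          rw [hphi, Finset.mul_sum]
          apply Finset.sum_congr rfl
          intro m _
          ring
        rw [hfactor]
        have := mul_le_mul_of_nonneg_left hsum (by linarith : (0:ℝ) ≤ 2*rho)
        refine le_trans this (le_of_eq ?_)
        field_simp
    have hψval : ∫ rho in (0:ℝ)..r, 2*rho/(1-rho^2)^2 = (1-r^2)⁻¹ - (1-(0:ℝ)^2)⁻¹ := by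
      apply intervalIntegral.integral_eq_sub_of_hasDerivAt
      · intro t ht
        rw [Set.uIcc_of_le hr0.le] at ht
        have h1 : (0:ℝ) < 1 - t^2 := by nlinarith [ht.1, ht.2]
        have hd : HasDerivAt (fun rho:ℝ => 1-rho^2) (-(2*t)) t := by
          have := (hasDerivAt_pow 2 t).const_sub 1
          refine this.congr_deriv ?_
          push_cast
          ring
        have := hd.inv (ne_of_gt h1)
        refine this.congr_deriv ?_
        field_simp
      · exact hψint
    have hgoal_eq : ∑ m ∈ Finset.range n, ((m:ℝ)+1) * ‖b (m+1)‖^2 * r^(2*(m+1)) = Phi r := by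
      rw [hPhi]
      apply Finset.sum_congr rfl
      intro m _
      have : 2*(m+1) = 2*m+2 := by omega
      rw [this]
    have chain : Phi r ≤ r^2/(1-r^2) := by
      have h0 : Phi r = ∫ rho in (0:ℝ)..r, phi rho := by rw [hint, hPhi0]; ring
      rw [h0]
      refine le_trans hcomp ?_
      rw [hψval]
      rw [show ((0:ℝ)^2 = 0) by norm_num]
      field_simp
      linarith
    calc ∑ m ∈ Finset.range n, ((m+1:ℕ):ℝ) * ‖b (m+1)‖^2 * r^(2*(m+1))
        = Phi r := by
          rw [← hgoal_eq]
          apply Finset.sum_congr rfl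
          intro m _
          push_cast
          ring
      _ ≤ r^2/(1-r^2) := chain
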